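/- arXiv:1706.00219 — 2 statements merged into one kernel-verified Lean document; each statement's English description precedes it below -/
import Mathlib

section
/- Welfare and revenue of equilibria are non-increasing in the total price: if (p,q) is a pure Nash equilibrium and w is any total price with w ≥ p+q, then R(p+q) ≥ R(w) and SW(p+q) ≥ SW(w). In particular, among all pure Nash equilibria, one with minimal total price has both the highest welfare and the highest revenue, and one with maximal total price has both the lowest welfare and the lowest revenue. -/
open scoped Classical

/-- The demand function induced by an instance with `n` demand levels,
values `v` and demands `d` (indices `1,…,n`):
`demand n v d x = d i` for the largest index `i ∈ {1,…,n}` with `x ≤ v i`,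
and `0` if there is no such index. -/
noncomputable def demand (n : ℕ) (v d : ℕ → ℝ) (x : ℝ) : ℝ :=
  if h : ((Finset.Icc 1 n).filter (fun i => x ≤ v i)).Nonempty then
    d (((Finset.Icc 1 n).filter (fun i => x ≤ v i)).max' h)
  else 0

/-- Total revenue at total price `x`. -/
noncomputable def rev (n : ℕ) (v d : ℕ → ℝ) (x : ℝ) : ℝ := x * demand n v d x

/-- Social welfare at total price `x` (with the convention `d 0 = 0`). -/
noncomputable def welfare (n : ℕ) (v d : ℕ → ℝ) (x : ℝ) : ℝ :=
  ∑ i ∈ (Finset.Icc 1 n).filter (fun i => x ≤ v i),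
    v i * (d i - if 1 < i then d (i - 1) else 0)

/-- `InBR n v d q p` : `p` is a best response to the price `q` of the other seller. -/
def InBR (n : ℕ) (v d : ℕ → ℝ) (q p : ℝ) : Prop :=
  0 ≤ p ∧ ∀ p', 0 ≤ p' → p' * demand n v d (p' + q) ≤ p * demand n v d (p + q)

/-- `(p, q)` is a pure Nash equilibrium. -/
def IsNE (n : ℕ) (v d : ℕ → ℝ) (p q : ℝ) : Prop :=
  0 ≤ p ∧ 0 ≤ q ∧ InBR n v d q p ∧ InBR n v d p q

/-- A valid instance with `n ≥ 2` demand levels: positive values strictly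
decreasing in the index, positive demands strictly increasing in the index. -/
def ValidInstance (n : ℕ) (v d : ℕ → ℝ) : Prop :=
  2 ≤ n ∧ 0 < v n ∧ (∀ i j, 1 ≤ i → i < j → j ≤ n → v j < v i) ∧
    0 < d 1 ∧ (∀ i j, 1 ≤ i → i < j → j ≤ n → d i < d j)


lemma d_pos_aux (n : ℕ) (v d : ℕ → ℝ) (h : ValidInstance n v d) {i : ℕ}
    (h1 : 1 ≤ i) (h2 : i ≤ n) : 0 < d i := by
  obtain ⟨hn, hv, hvd, hd1, hdm⟩ := h
  rcases eq_or_lt_of_le h1 with h | h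
  · rw [← h]; exact hd1
  · exact hd1.trans (hdm 1 i le_rfl h h2)

lemma v_pos_aux (n : ℕ) (v d : ℕ → ℝ) (h : ValidInstance n v d) {i : ℕ}
    (h1 : 1 ≤ i) (h2 : i ≤ n) : 0 < v i := by
  obtain ⟨hn, hv, hvd, hd1, hdm⟩ := h
  rcases eq_or_lt_of_le h2 with h | h
  · rw [h]; exact hv
  · exact hv.trans (hvd i n h1 h le_rfl)

lemma demand_nonneg_aux (n : ℕ) (v d : ℕ → ℝ) (h : ValidInstance n v d) (x : ℝ) :
    0 ≤ demand n v d x := by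
  unfold demand
  split
  · next hne =>
    have hm := Finset.max'_mem _ hne
    simp only [Finset.mem_filter, Finset.mem_Icc] at hm
    exact (d_pos_aux n v d h hm.1.1 hm.1.2).le
  · exact le_rfl

lemma welfare_anti (n : ℕ) (v d : ℕ → ℝ) (h : ValidInstance n v d) {x w : ℝ}
    (hxw : x ≤ w) : welfare n v d w ≤ welfare n v d x := by
  unfold welfare
  apply Finset.sum_le_sum_of_subset_of_nonneg
  · intro i hi
    simp only [Finset.mem_filter] at hi ⊢
    exact ⟨hi.1, le_trans hxw hi.2⟩
  · intro i hi _
    simp only [Finset.mem_filter, Finset.mem_Icc] at hi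
    obtain ⟨⟨h1, h2⟩, _⟩ := hi
    apply mul_nonneg (v_pos_aux n v d h h1 h2).le
    split
    · next hgt =>
      have := h.2.2.2.2 (i - 1) i (by omega) (by omega) h2
      linarith
    · next =>
      have := d_pos_aux n v d h h1 h2
      linarith

/-- Welfare and revenue of equilibria are non-increasing in the total price;
in particular an equilibrium of minimal total price has the highest welfare
and revenue among all equilibria, and one of maximal total price the lowest. -/
theorem stmt_3 (n : ℕ) (v d : ℕ → ℝ) (h : ValidInstance n v d) :
    (∀ p q : ℝ, IsNE n v d p q → ∀ w : ℝ, p + q ≤ w →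
      rev n v d w ≤ rev n v d (p + q) ∧ welfare n v d w ≤ welfare n v d (p + q)) ∧
    (∀ p q p' q' : ℝ, IsNE n v d p q → IsNE n v d p' q' → p + q ≤ p' + q' →
      rev n v d (p' + q') ≤ rev n v d (p + q) ∧
      welfare n v d (p' + q') ≤ welfare n v d (p + q)) := by
  have hkey : ∀ p q : ℝ, IsNE n v d p q → ∀ w : ℝ, p + q ≤ w →
      rev n v d w ≤ rev n v d (p + q) ∧ welfare n v d w ≤ welfare n v d (p + q) := by
    intro p q hne w hw
    obtain ⟨hp, hq, ⟨_, hbrp⟩, ⟨_, hbrq⟩⟩ := hne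
    constructor
    · have h1 := hbrp (w - q) (by linarith)
      have h2 := hbrq (w - p) (by linarith)
      rw [sub_add_cancel] at h1 h2
      rw [add_comm q p] at h2
      have hDw := demand_nonneg_aux n v d h w
      unfold rev
      nlinarith [mul_nonneg (sub_nonneg.2 hw) hDw]
    · exact welfare_anti n v d h hw
  refine ⟨hkey, ?_⟩
  intro p q p' q' h1 h2 hle
  exact hkey p q h1 (p' + q') hle
end

section
/- For every instance and every non-trivial pure Nash equilibrium (p,q): the optimal welfare is at most D times the welfare of the equilibrium, SW(0) ≤ D·SW(p+q); and the monopolist revenue is at most 2D times the revenue of the equilibrium, R(x) ≤ 2D·R(p+q) for every x ≥ 0, where D = d_n/d_1. -/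
open scoped Classical

section Aux

variable {n : ℕ} {v d : ℕ → ℝ}

lemma dmono (h : ValidInstance n v d) {i j : ℕ} (h1 : 1 ≤ i) (hij : i ≤ j)
    (hj : j ≤ n) : d i ≤ d j := by
  rcases eq_or_lt_of_le hij with rfl | hlt
  · exact le_rfl
  · exact (h.2.2.2.2 i j h1 hlt hj).le

lemma vmono (h : ValidInstance n v d) {i j : ℕ} (h1 : 1 ≤ i) (hij : i ≤ j)
    (hj : j ≤ n) : v j ≤ v i := by
  rcases eq_or_lt_of_le hij with rfl | hlt
  · exact le_rfl
  · exact (h.2.2.1 i j h1 hlt hj).le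

lemma vpos (h : ValidInstance n v d) {i : ℕ} (h1 : 1 ≤ i) (hi : i ≤ n) :
    0 < v i := lt_of_lt_of_le h.2.1 (vmono h h1 hi le_rfl)

lemma dpos (h : ValidInstance n v d) {i : ℕ} (h1 : 1 ≤ i) (hi : i ≤ n) :
    0 < d i := lt_of_lt_of_le h.2.2.2.1 (dmono h le_rfl h1 hi)

lemma one_le_n (h : ValidInstance n v d) : 1 ≤ n := le_trans one_le_two h.1

/-- If the filter is nonempty, demand equals `d` of the max index. -/
lemma demand_nonempty (x : ℝ)
    (hne : ((Finset.Icc 1 n).filter (fun i => x ≤ v i)).Nonempty) :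
    demand n v d x = d (((Finset.Icc 1 n).filter (fun i => x ≤ v i)).max' hne) := by
  simp [demand, hne]

lemma filter_nonempty_of_le (h : ValidInstance n v d) {x : ℝ} (hx : x ≤ v 1) :
    ((Finset.Icc 1 n).filter (fun i => x ≤ v i)).Nonempty := by
  refine ⟨1, ?_⟩
  simp [Finset.mem_filter, Finset.mem_Icc, one_le_n h, hx]

lemma demand_ge (h : ValidInstance n v d) {x : ℝ} (hx : x ≤ v 1) :
    d 1 ≤ demand n v d x := by
  have hne := filter_nonempty_of_le h hx
  rw [demand_nonempty x hne]
  have hm := Finset.max'_mem _ hne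
  rw [Finset.mem_filter, Finset.mem_Icc] at hm
  exact dmono h le_rfl hm.1.1 hm.1.2

lemma demand_le (h : ValidInstance n v d) (x : ℝ) : demand n v d x ≤ d n := by
  by_cases hne : ((Finset.Icc 1 n).filter (fun i => x ≤ v i)).Nonempty
  · rw [demand_nonempty x hne]
    have hm := Finset.max'_mem _ hne
    rw [Finset.mem_filter, Finset.mem_Icc] at hm
    exact dmono h hm.1.1 hm.1.2 le_rfl
  · simp [demand, hne]
    exact (dpos h (one_le_n h) le_rfl).le

lemma demand_nonneg (h : ValidInstance n v d) (x : ℝ) : 0 ≤ demand n v d x := by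
  by_cases hne : ((Finset.Icc 1 n).filter (fun i => x ≤ v i)).Nonempty
  · rw [demand_nonempty x hne]
    have hm := Finset.max'_mem _ hne
    rw [Finset.mem_filter, Finset.mem_Icc] at hm
    exact (dpos h hm.1.1 hm.1.2).le
  · simp [demand, hne]

lemma rev_le (h : ValidInstance n v d) {x : ℝ} (hx : 0 ≤ x) :
    rev n v d x ≤ v 1 * d n := by
  by_cases hne : ((Finset.Icc 1 n).filter (fun i => x ≤ v i)).Nonempty
  · rw [rev, demand_nonempty x hne]
    have hm := Finset.max'_mem _ hne
    rw [Finset.mem_filter, Finset.mem_Icc] at hm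
    have hxv : x ≤ v 1 := le_trans hm.2 (vmono h le_rfl hm.1.1 hm.1.2)
    exact mul_le_mul hxv (dmono h hm.1.1 hm.1.2 le_rfl) (dpos h hm.1.1 hm.1.2).le
      ((vpos h le_rfl (one_le_n h)).le)
  · rw [rev]
    simp only [demand, hne, dif_neg, not_false_iff, mul_zero]
    exact mul_nonneg (vpos h le_rfl (one_le_n h)).le (dpos h (one_le_n h) le_rfl).le

/-- The equilibrium revenue is at least `v 1 * d 1`. -/
lemma rev_NE_ge (h : ValidInstance n v d) {p q : ℝ} (hNE : IsNE n v d p q)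
    (hnt : p + q ≤ v 1) : v 1 * d 1 ≤ rev n v d (p + q) := by
  obtain ⟨hp, hq, hbrp, hbrq⟩ := hNE
  have hq1 : q ≤ v 1 := le_trans (le_add_of_nonneg_left hp) hnt
  have hp1 : p ≤ v 1 := le_trans (le_add_of_nonneg_left hq) (by linarith)
  have hd1 : d 1 ≤ demand n v d (v 1) := demand_ge h le_rfl
  have hd0 : (0:ℝ) < d 1 := h.2.2.2.1
  -- deviation for player p
  have h1 : (v 1 - q) * d 1 ≤ p * demand n v d (p + q) := by
    have := hbrp.2 (v 1 - q) (by linarith)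
    have heq : v 1 - q + q = v 1 := by ring
    rw [heq] at this
    calc (v 1 - q) * d 1 ≤ (v 1 - q) * demand n v d (v 1) :=
          mul_le_mul_of_nonneg_left hd1 (by linarith)
      _ ≤ p * demand n v d (p + q) := this
  have h2 : (v 1 - p) * d 1 ≤ q * demand n v d (q + p) := by
    have := hbrq.2 (v 1 - p) (by linarith)
    have heq : v 1 - p + p = v 1 := by ring
    rw [heq] at this
    calc (v 1 - p) * d 1 ≤ (v 1 - p) * demand n v d (v 1) :=
          mul_le_mul_of_nonneg_left hd1 (by linarith)
      _ ≤ q * demand n v d (q + p) := this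
  rw [add_comm q p] at h2
  have hsum : (2 * v 1 - (p + q)) * d 1 ≤ (p + q) * demand n v d (p + q) := by
    have := add_le_add h1 h2
    nlinarith [this]
  rw [rev]
  nlinarith [hsum]

lemma tele_aux (f : ℕ → ℝ) (hf0 : f 0 = 0) :
    ∀ m, ∑ i ∈ Finset.Icc 1 m, (f i - f (i - 1)) = f m
  | 0 => by simp [hf0]
  | (m + 1) => by
      rw [Finset.sum_Icc_succ_top (Nat.succ_le_succ (Nat.zero_le m)),
        tele_aux f hf0 m]
      simp

/-- The telescoping sum of demand increments equals `d n`. -/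
lemma telescope (h : ValidInstance n v d) :
    ∑ i ∈ Finset.Icc 1 n, (d i - if 1 < i then d (i - 1) else 0) = d n := by
  have key : ∀ i ∈ Finset.Icc 1 n,
      (d i - if 1 < i then d (i - 1) else 0)
        = (fun j : ℕ => if j = 0 then 0 else d j) i
          - (fun j : ℕ => if j = 0 then 0 else d j) (i - 1) := by
    intro i hi
    rw [Finset.mem_Icc] at hi
    rcases eq_or_lt_of_le hi.1 with hi1 | hi1
    · simp [← hi1]
    · have h1 : i ≠ 0 := by omega
      have h2 : i - 1 ≠ 0 := by omega
      simp_all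
  rw [Finset.sum_congr rfl key,
    tele_aux (fun j : ℕ => if j = 0 then 0 else d j) (by simp) n]
  have hn : n ≠ 0 := by have := one_le_n h; omega
  simp [hn]

lemma welfare_zero_le (h : ValidInstance n v d) :
    welfare n v d 0 ≤ v 1 * d n := by
  rw [welfare]
  have hfil : (Finset.Icc 1 n).filter (fun i => (0:ℝ) ≤ v i) = Finset.Icc 1 n := by
    apply Finset.filter_true_of_mem
    intro i hi
    rw [Finset.mem_Icc] at hi
    exact (vpos h hi.1 hi.2).le
  rw [hfil]
  calc ∑ i ∈ Finset.Icc 1 n, v i * (d i - if 1 < i then d (i - 1) else 0)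
      ≤ ∑ i ∈ Finset.Icc 1 n, v 1 * (d i - if 1 < i then d (i - 1) else 0) := by
        apply Finset.sum_le_sum
        intro i hi
        rw [Finset.mem_Icc] at hi
        apply mul_le_mul_of_nonneg_right (vmono h le_rfl hi.1 hi.2)
        rcases eq_or_lt_of_le hi.1 with hi1 | hi1
        · simp [← hi1]
          exact h.2.2.2.1.le
        · simp only [hi1, if_pos]
          have : d (i - 1) ≤ d i := by
            apply dmono h (by omega) (by omega) hi.2
          linarith
    _ = v 1 * d n := by rw [← Finset.mul_sum, telescope h]

lemma welfare_NE_ge (h : ValidInstance n v d) {x : ℝ} (hx : x ≤ v 1) :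
    v 1 * d 1 ≤ welfare n v d x := by
  rw [welfare]
  have h1mem : 1 ∈ (Finset.Icc 1 n).filter (fun i => x ≤ v i) := by
    simp [Finset.mem_Icc, one_le_n h, hx]
  have hterm : ∀ i ∈ (Finset.Icc 1 n).filter (fun i => x ≤ v i),
      0 ≤ v i * (d i - if 1 < i then d (i - 1) else 0) := by
    intro i hi
    rw [Finset.mem_filter, Finset.mem_Icc] at hi
    apply mul_nonneg (vpos h hi.1.1 hi.1.2).le
    rcases eq_or_lt_of_le hi.1.1 with hi1 | hi1
    · simp [← hi1]
      exact h.2.2.2.1.le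
    · simp only [hi1, if_pos]
      have : d (i - 1) ≤ d i := dmono h (by omega) (by omega) hi.1.2
      linarith
  have := Finset.single_le_sum
    (f := fun i => v i * (d i - if 1 < i then d (i - 1) else 0)) hterm h1mem
  simpa using this

end Aux

/-- For every non-trivial pure Nash equilibrium: the optimal welfare is at
most `D` times its welfare, and the monopolist revenue is at most `2D` times
its revenue. -/
theorem stmt_18 (n : ℕ) (v d : ℕ → ℝ) (h : ValidInstance n v d)
    (p q : ℝ) (hNE : IsNE n v d p q) (hnt : p + q ≤ v 1) :
    welfare n v d 0 ≤ (d n / d 1) * welfare n v d (p + q) ∧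
    ∀ x : ℝ, 0 ≤ x → rev n v d x ≤ 2 * (d n / d 1) * rev n v d (p + q) := by
  have hd1 : (0:ℝ) < d 1 := h.2.2.2.1
  have hdn : (0:ℝ) < d n := dpos h (one_le_n h) le_rfl
  have hD : (0:ℝ) < d n / d 1 := div_pos hdn hd1
  have hkey : (d n / d 1) * (v 1 * d 1) = v 1 * d n := by
    field_simp
  constructor
  · calc welfare n v d 0 ≤ v 1 * d n := welfare_zero_le h
      _ = (d n / d 1) * (v 1 * d 1) := hkey.symm
      _ ≤ (d n / d 1) * welfare n v d (p + q) :=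
          mul_le_mul_of_nonneg_left (welfare_NE_ge h hnt) hD.le
  · intro x hx
    have hrev : v 1 * d 1 ≤ rev n v d (p + q) := rev_NE_ge h hNE hnt
    have hv1 : (0:ℝ) < v 1 := vpos h le_rfl (one_le_n h)
    calc rev n v d x ≤ v 1 * d n := rev_le h hx
      _ = (d n / d 1) * (v 1 * d 1) := hkey.symm
      _ ≤ (d n / d 1) * rev n v d (p + q) :=
          mul_le_mul_of_nonneg_left hrev hD.le
      _ ≤ 2 * (d n / d 1) * rev n v d (p + q) := by
          nlinarith [mul_pos hv1 hd1]
end
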